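/- Let n ≥ 4 be an integer and let 𝓘 = {I ⊆ {1,…,n} : 1 ∈ I and 2 ≤ |I| ≤ n − 2}. Call two elements I, J ∈ 𝓘 compatible if I ⊆ J, or J ⊆ I, or I ∪ J = {1,…,n}. Then every subset σ ⊆ 𝓘 whose elements are pairwise compatible has cardinality at most n − 3. -/

import Mathlib

/-- A laminar family (pairwise nested or disjoint) of sets of size ≥ 2 on a
ground set `S` has at most `|S| - 1` members. -/
lemma laminar_bound (k : ℕ) : ∀ (F : Finset (Finset ℕ)) (S : Finset ℕ),
    F.card = k →
    (∀ A ∈ F, A ⊆ S) → (∀ A ∈ F, 2 ≤ A.card) →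
    (∀ A ∈ F, ∀ B ∈ F, A ⊆ B ∨ B ⊆ A ∨ Disjoint A B) →
    F.card ≤ S.card - 1 := by
  induction k using Nat.strong_induction_on with
  | _ k ih =>
    intro F S hk hsub hcard2 hlam
    rcases F.eq_empty_or_nonempty with rfl | hne
    · simp
    obtain ⟨A, hA, hmin⟩ := F.exists_minimal hne
    obtain ⟨x, hx, y, hy, hxy⟩ := Finset.one_lt_card.1 (hcard2 A hA)
    -- every B ∈ F with B ≠ A satisfies A ⊆ B or Disjoint A B
    have key : ∀ B ∈ F, B ≠ A → A ⊆ B ∨ Disjoint A B := by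
      intro B hB hBA
      rcases hlam A hA B hB with h | h | h
      · exact Or.inl h
      · exact absurd (Finset.Subset.antisymm h (hmin hB h)) hBA
      · exact Or.inr h
    set F' : Finset (Finset ℕ) := (F.erase A).image (fun B => B.erase y) with hF'
    have hinj : Set.InjOn (fun B => B.erase y) (F.erase A : Set (Finset ℕ)) := by
      intro B hB C hC hBC
      simp only [Finset.coe_erase, Set.mem_diff, Finset.mem_coe] at hB hC
      by_contra hne'
      simp only at hBC
      -- WLOG y ∈ C \ B
      have main : ∀ B C : Finset ℕ, B ∈ F → C ∈ F → B ≠ A → C ≠ A →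
          B.erase y = C.erase y → y ∉ B → y ∈ C → False := by
        intro B C hB hC hBA hCA hBC hyB hyC
        have hBeq : B = C.erase y := by
          rw [← hBC]; exact (Finset.erase_eq_of_notMem hyB).symm
        -- A ⊆ C since y ∈ A ∩ C
        have hAC : A ⊆ C := by
          rcases key C hC hCA with h | h
          · exact h
          · exact absurd hy (Finset.disjoint_left.1 h · hyC)
        have hxB : x ∈ B := by
          rw [hBeq, Finset.mem_erase]; exact ⟨hxy, hAC hx⟩
        rcases key B hB hBA with h | h
        · exact hyB (h hy)
        · exact Finset.disjoint_left.1 h hx hxB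
      have hyBC : y ∈ B ∨ y ∈ C := by
        by_contra h
        push_neg at h
        apply hne'
        rw [← Finset.erase_eq_of_notMem h.1, ← Finset.erase_eq_of_notMem h.2, hBC]
      rcases Decidable.em (y ∈ B) with hyB | hyB
      · rcases Decidable.em (y ∈ C) with hyC | hyC
        · apply hne'
          have := Finset.insert_erase hyB
          have := Finset.insert_erase hyC
          rw [← Finset.insert_erase hyB, ← Finset.insert_erase hyC, hBC]
        · exact main C B hC.1 hB.1 hC.2 hB.2 hBC.symm hyC hyB
      · exact main B C hB.1 hC.1 hB.2 hC.2 hBC hyB (hyBC.resolve_left hyB)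
    have hcardF' : F'.card = F.card - 1 := by
      rw [hF', Finset.card_image_of_injOn hinj, Finset.card_erase_of_mem hA]
    have hAS : A ⊆ S := hsub A hA
    have hyS : y ∈ S := hAS hy
    have hS2 : 2 ≤ S.card := le_trans (hcard2 A hA) (Finset.card_le_card hAS)
    -- apply IH to F' on S.erase y
    have hF'le : F'.card ≤ (S.erase y).card - 1 := by
      refine ih F'.card ?_ F' (S.erase y) rfl ?_ ?_ ?_
      · rw [hcardF']
        have : 0 < F.card := Finset.card_pos.2 hne
        omega
      · intro B' hB'
        obtain ⟨B, hB, rfl⟩ := Finset.mem_image.1 hB'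
        simp only [Finset.mem_erase] at hB
        intro z hz
        rw [Finset.mem_erase] at hz ⊢
        exact ⟨hz.1, hsub B hB.2 hz.2⟩
      · intro B' hB'
        obtain ⟨B, hB, rfl⟩ := Finset.mem_image.1 hB'
        rw [Finset.mem_erase] at hB
        rcases Decidable.em (y ∈ B) with hyB | hyB
        · have hAB : A ⊆ B := by
            rcases key B hB.2 hB.1 with h | h
            · exact h
            · exact absurd hy (Finset.disjoint_left.1 h · hyB)
          have hAB' : A ⊂ B := lt_of_le_of_ne hAB (Ne.symm hB.1)
          have : A.card < B.card := Finset.card_lt_card hAB'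
          have h2 := hcard2 A hA
          rw [Finset.card_erase_of_mem hyB]
          omega
        · rw [Finset.erase_eq_of_notMem hyB]
          exact hcard2 B hB.2
      · intro B' hB' C' hC'
        obtain ⟨B, hB, rfl⟩ := Finset.mem_image.1 hB'
        obtain ⟨C, hC, rfl⟩ := Finset.mem_image.1 hC'
        rcases hlam B (Finset.mem_of_mem_erase hB) C (Finset.mem_of_mem_erase hC) with h | h | h
        · exact Or.inl (Finset.erase_subset_erase y h)
        · exact Or.inr (Or.inl (Finset.erase_subset_erase y h))
        · exact Or.inr (Or.inr (h.mono (Finset.erase_subset y B) (Finset.erase_subset y C)))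
    have hSerase : (S.erase y).card = S.card - 1 := Finset.card_erase_of_mem hyS
    have h0 : 0 < F.card := Finset.card_pos.2 hne
    omega

/-- If moreover no member equals the ground set, the bound improves to `|S| - 2`. -/
lemma laminar_bound' (F : Finset (Finset ℕ)) (S : Finset ℕ)
    (hsub : ∀ A ∈ F, A ⊆ S) (h2 : ∀ A ∈ F, 2 ≤ A.card) (hne : ∀ A ∈ F, A ≠ S)
    (hlam : ∀ A ∈ F, ∀ B ∈ F, A ⊆ B ∨ B ⊆ A ∨ Disjoint A B) :
    F.card ≤ S.card - 2 := by
  rcases F.eq_empty_or_nonempty with rfl | hF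
  · simp
  obtain ⟨A₀, hA₀⟩ := hF
  have hSnot : S ∉ F := fun h => hne S h rfl
  have hS2 : 2 ≤ S.card := le_trans (h2 A₀ hA₀) (Finset.card_le_card (hsub A₀ hA₀))
  have := laminar_bound (insert S F).card (insert S F) S rfl
    (by intro A hA
        rcases Finset.mem_insert.1 hA with h | hA
        · subst h; exact subset_rfl
        · exact hsub A hA)
    (by intro A hA
        rcases Finset.mem_insert.1 hA with h | hA
        · subst h; exact hS2
        · exact h2 A hA)
    (by intro A hA B hB
        rcases Finset.mem_insert.1 hA with h | hA'
        · subst h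
          rcases Finset.mem_insert.1 hB with h | hB'
          · subst h; exact Or.inl subset_rfl
          · exact Or.inr (Or.inl (hsub B hB'))
        · rcases Finset.mem_insert.1 hB with h | hB'
          · subst h; exact Or.inl (hsub A hA')
          · exact hlam A hA' B hB')
  rw [Finset.card_insert_of_notMem hSnot] at this
  omega

/-- Every pairwise-compatible subset `σ` of
`𝓘 = {I ⊆ {1,…,n} : 1 ∈ I, 2 ≤ |I| ≤ n − 2}` (where `I, J` are compatible if
`I ⊆ J`, `J ⊆ I`, or `I ∪ J = {1,…,n}`) has cardinality at most `n − 3`. -/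
theorem compatible_card_le (n : ℕ) (hn : 4 ≤ n)
    (σ : Finset (Finset ℕ))
    (hσ : ∀ I ∈ σ, I ⊆ Finset.Icc 1 n ∧ 1 ∈ I ∧ 2 ≤ I.card ∧ I.card ≤ n - 2)
    (hcompat : ∀ I ∈ σ, ∀ J ∈ σ, I ⊆ J ∨ J ⊆ I ∨ I ∪ J = Finset.Icc 1 n) :
    σ.card ≤ n - 3 := by
  set S : Finset ℕ := Finset.Icc 1 n with hS
  set T : Finset ℕ := Finset.Icc 2 n with hT
  have hScard : S.card = n := by simp [hS, Nat.card_Icc]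
  have hTcard : T.card = n - 1 := by simp [hT, Nat.card_Icc]
  set c : Finset ℕ → Finset ℕ := fun I => S \ I with hc
  have hcinj : Set.InjOn c (σ : Set (Finset ℕ)) := by
    intro I hI J hJ hIJ
    have hI' := (hσ I hI).1
    have hJ' := (hσ J hJ).1
    have : S \ (S \ I) = S \ (S \ J) := by rw [hc] at hIJ; simp only [hc] at hIJ; rw [hIJ]
    rwa [sdiff_sdiff_eq_self hI', sdiff_sdiff_eq_self hJ'] at this
  set F : Finset (Finset ℕ) := σ.image c with hF
  have hcard : F.card = σ.card := Finset.card_image_of_injOn hcinj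
  have hccard : ∀ I ∈ σ, (c I).card = n - I.card := by
    intro I hI
    rw [hc]
    simp only
    rw [Finset.card_sdiff_of_subset (hσ I hI).1, hScard]
  have hsub : ∀ A ∈ F, A ⊆ T := by
    intro A hA
    obtain ⟨I, hI, rfl⟩ := Finset.mem_image.1 hA
    intro z hz
    simp only [hc, Finset.mem_sdiff, hS, Finset.mem_Icc] at hz
    have h1 : z ≠ 1 := fun h => hz.2 (h ▸ (hσ I hI).2.1)
    simp only [hT, Finset.mem_Icc]
    omega
  have h2 : ∀ A ∈ F, 2 ≤ A.card := by
    intro A hA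
    obtain ⟨I, hI, rfl⟩ := Finset.mem_image.1 hA
    rw [hccard I hI]
    have := (hσ I hI).2.2.2
    omega
  have hneq : ∀ A ∈ F, A ≠ T := by
    intro A hA
    obtain ⟨I, hI, rfl⟩ := Finset.mem_image.1 hA
    intro h
    have := hccard I hI
    rw [h, hTcard] at this
    have h2 := (hσ I hI).2.2.1
    have h3 := (hσ I hI).2.2.2
    omega
  have hlam : ∀ A ∈ F, ∀ B ∈ F, A ⊆ B ∨ B ⊆ A ∨ Disjoint A B := by
    intro A hA B hB
    obtain ⟨I, hI, rfl⟩ := Finset.mem_image.1 hA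
    obtain ⟨J, hJ, rfl⟩ := Finset.mem_image.1 hB
    rcases hcompat I hI J hJ with h | h | h
    · exact Or.inr (Or.inl (Finset.sdiff_subset_sdiff subset_rfl h))
    · exact Or.inl (Finset.sdiff_subset_sdiff subset_rfl h)
    · refine Or.inr (Or.inr ?_)
      rw [Finset.disjoint_left]
      intro z hz hz'
      simp only [hc, Finset.mem_sdiff] at hz hz'
      have : z ∈ I ∪ J := by rw [h]; exact hz.1
      rcases Finset.mem_union.1 this with h' | h'
      · exact hz.2 h'
      · exact hz'.2 h'
  have := laminar_bound' F T hsub h2 hneq hlam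
  rw [hcard, hTcard] at this
  omega
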